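/- Let a < b be coprime positive integers with b ≡ 1 (mod a). Then the obstruction graph OG(a,b) has no edges; equivalently, Âss(a,b) = Ass(a,b), i.e., every set of pairwise noncrossing a,b-admissible diagonals of P_{b+1} is contained in F(D) for some a,b-Dyck path D. -/
import Mathlib


/-- `S(a,b) = { ⌊ib/a⌋ : i = 1, …, a-1 }`. -/
def Sab (a b : ℕ) : Finset ℕ := (Finset.Icc 1 (a - 1)).image (fun i => i * b / a)

/-- A diagonal of the polygon `P_{b+1}` with boundary points `0, 1, …, b`:
a pair `i < j` with `j - i ≥ 2` and `(i, j) ≠ (0, b)`. -/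
def IsDiagonal (b i j : ℕ) : Prop := i + 2 ≤ j ∧ j ≤ b ∧ ¬(i = 0 ∧ j = b)

/-- A diagonal `ij` is `a,b`-admissible if it separates `j - i - 1` and `b - j + i`
boundary points, both of which lie in `S(a,b)`. -/
def Admissible (a b : ℕ) (d : ℕ × ℕ) : Prop :=
  IsDiagonal b d.1 d.2 ∧ d.2 - d.1 - 1 ∈ Sab a b ∧ b - d.2 + d.1 ∈ Sab a b

/-- Two diagonals `ij` and `km` cross if `i < k < j < m` or `k < i < m < j`. -/
def Crosses (d d' : ℕ × ℕ) : Prop :=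
  (d.1 < d'.1 ∧ d'.1 < d.2 ∧ d.2 < d'.2) ∨ (d'.1 < d.1 ∧ d.1 < d'.2 ∧ d'.2 < d.2)

/-- An `a,b`-Dyck path: a north/east lattice path from `(0,0)` to `(b,a)` staying weakly
above `y = (a/b) x`.  It is encoded by the height `h u` of its unique east step over the
column interval `[u, u+1]`, for `0 ≤ u < b`; we normalize `h u = a` for `u ≥ b`. -/
structure DyckPath (a b : ℕ) where
  h : ℕ → ℕ
  mono : Monotone h
  norm : ∀ x, b ≤ x → h x = a
  above : ∀ x, x < b → a * (x + 1) ≤ b * h x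

/-- The lattice point `(x, y)` lies on `D` at the bottom of a north step of `D`. -/
def BottomNorth (a b : ℕ) (D : DyckPath a b) (x y : ℕ) : Prop :=
  x ≤ b ∧ (if x = 0 then 0 else D.h (x - 1)) ≤ y ∧ y < D.h x

/-- The laser of slope `a/b` fired northeast from the lattice point `(x, y)` of `D` first
hits `D` in the interior of the east step whose right endpoint has `x`-coordinate `k`;
the associated laser diagonal is `d(P) = (x, k)`.  The laser passes strictly below the
right endpoint of every earlier east step and strictly above the one it hits. -/
def IsLaserDiag (a b : ℕ) (D : DyckPath a b) (x y k : ℕ) : Prop :=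
  x < k ∧ k ≤ b ∧ b * D.h (k - 1) < b * y + a * (k - x) ∧
    ∀ u, x ≤ u → u + 1 < k → b * y + a * (u + 1 - x) < b * D.h u

/-- `F(D)`: the set of laser diagonals `d(P)` of the lattice points `P ≠ (0,0)` at the
bottoms of north steps of `D`. -/
def FD (a b : ℕ) (D : DyckPath a b) : Set (ℕ × ℕ) :=
  { d | ∃ y, BottomNorth a b D d.1 y ∧ (d.1, y) ≠ (0, 0) ∧ IsLaserDiag a b D d.1 y d.2 }

/-- A finite abstract simplicial complex on the ground set `E`: a downward closed
collection of finite subsets of `E`. -/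
structure AbsCplx (E : Type*) where
  faces : Set (Finset E)
  down : ∀ F ∈ faces, ∀ F' ⊆ F, F' ∈ faces

/-- The rational associahedron `Âss(a,b)`: faces are the sets of pairwise noncrossing
`a,b`-admissible diagonals. -/
def hatAss (a b : ℕ) : AbsCplx (ℕ × ℕ) where
  faces := { F | (∀ d ∈ F, Admissible a b d) ∧ ∀ d ∈ F, ∀ d' ∈ F, ¬Crosses d d' }
  down := fun F hF F' hsub =>
    ⟨fun d hd => hF.1 d (hsub hd), fun d hd d' hd' => hF.2 d (hsub hd) d' (hsub hd')⟩

/-- The rational associahedron `Ass(a,b)`: faces are the subsets of the sets `F(D)`,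
as `D` ranges over `a,b`-Dyck paths. -/
def Ass (a b : ℕ) : AbsCplx (ℕ × ℕ) where
  faces := { F | ∃ D : DyckPath a b, ∀ d ∈ F, d ∈ FD a b D }
  down := fun F hF F' hsub =>
    let ⟨D, hD⟩ := hF
    ⟨D, fun d hd => hD d (hsub hd)⟩

/-- Two distinct `a,b`-admissible diagonals `d, d'` form an edge of the obstruction graph
`OG(a,b)` exactly when `{d, d'}` is a face of `Âss(a,b)` but not of `Ass(a,b)`. -/
def OGEdge (a b : ℕ) (d d' : ℕ × ℕ) : Prop :=
  d ≠ d' ∧ ({d, d'} : Finset (ℕ × ℕ)) ∈ (hatAss a b).faces ∧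
    ({d, d'} : Finset (ℕ × ℕ)) ∉ (Ass a b).faces

namespace OGF

def sdm (m : ℕ) (d : ℕ × ℕ) : ℕ := (d.2 - d.1 - 1) / m

def filt (b : ℕ) (F : Finset (ℕ × ℕ)) (x : ℕ) : Finset (ℕ × ℕ) :=
  F.filter fun d => x < d.1 ∧ x + 1 < d.2 ∧ d.2 ≤ b

def hAux (a b m : ℕ) (F : Finset (ℕ × ℕ)) : ℕ → ℕ → ℕ
  | 0, _ => a
  | n+1, x => (filt b F x).fold min a fun d => hAux a b m F n (d.2 - 1) - sdm m d

def hh (a b m : ℕ) (F : Finset (ℕ × ℕ)) (x : ℕ) : ℕ := hAux a b m F b x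

variable {a b m : ℕ} {F : Finset (ℕ × ℕ)}

lemma filt_empty {x : ℕ} (hx : b ≤ x + 1) : filt b F x = ∅ := by
  ext d
  simp only [filt, Finset.mem_filter, Finset.notMem_empty, iff_false]
  rintro ⟨-, -, h2, h3⟩; omega

lemma hAux_stab : ∀ n x, b ≤ x + n + 1 → hAux a b m F (n+1) x = hAux a b m F n x := by
  intro n
  induction n with
  | zero =>
    intro x h
    show (filt b F x).fold min a _ = a
    rw [filt_empty h, Finset.fold_empty]
  | succ n ih =>
    intro x h
    show (filt b F x).fold min a _ = (filt b F x).fold min a _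
    apply Finset.fold_congr
    intro d hd
    simp only [filt, Finset.mem_filter] at hd
    rw [ih (d.2 - 1) (by omega)]

lemma hh_unfold (x : ℕ) :
    hh a b m F x = (filt b F x).fold min a fun d => hh a b m F (d.2 - 1) - sdm m d := by
  have h1 : hAux a b m F (b+1) x = hAux a b m F b x := hAux_stab b x (by omega)
  conv_lhs => rw [hh, ← h1]
  rfl

lemma hh_le (x : ℕ) : hh a b m F x ≤ a := by
  rw [hh_unfold]; exact (Finset.fold_min_le _).2 (Or.inl le_rfl)

lemma le_hh {c x : ℕ} (hc : c ≤ a)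
    (h : ∀ d ∈ filt b F x, c ≤ hh a b m F (d.2 - 1) - sdm m d) : c ≤ hh a b m F x := by
  rw [hh_unfold]; exact (Finset.le_fold_min _).2 ⟨hc, h⟩

lemma hh_le_term {x : ℕ} {d : ℕ × ℕ} (hd : d ∈ filt b F x) :
    hh a b m F x ≤ hh a b m F (d.2 - 1) - sdm m d := by
  rw [hh_unfold]; exact (Finset.fold_min_le _).2 (Or.inr ⟨d, hd, le_rfl⟩)

lemma filt_anti {x x' : ℕ} (h : x ≤ x') : filt b F x' ⊆ filt b F x := by
  intro d hd
  simp only [filt, Finset.mem_filter] at hd ⊢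
  exact ⟨hd.1, by omega, by omega, hd.2.2.2⟩

lemma hh_mono {x x' : ℕ} (h : x ≤ x') : hh a b m F x ≤ hh a b m F x' := by
  apply le_hh (hh_le x)
  intro d hd
  exact hh_le_term (filt_anti h hd)

lemma hh_top {x : ℕ} (hx : b ≤ x + 1) : hh a b m F x = a := by
  rw [hh_unfold, filt_empty hx, Finset.fold_empty]

lemma arith1 {a m : ℕ} (hm : 1 ≤ m) (c : ℕ) (hc : 1 ≤ c) :
    a * c < (a * m + 1) * ((c - 1) / m + 1) := by
  have hd := Nat.div_add_mod (c-1) m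
  have hr : (c-1) % m < m := Nat.mod_lt _ (by omega)
  set q := (c-1)/m with hq
  set r := (c-1) % m with hrr
  have hc' : c = m * q + r + 1 := by omega
  have h1 : a * (r+1) ≤ a * m := Nat.mul_le_mul_left a (by omega)
  rw [hc']
  nlinarith [h1]

lemma arith2 {k m : ℕ} (hk : 1 ≤ k) (hm : 1 ≤ m) : (k * m - 1) / m = k - 1 := by
  obtain ⟨k, rfl⟩ := Nat.exists_eq_add_of_le hk
  have h1 : (1 + k) * m - 1 = (m - 1) + m * k := by
    have : (1 + k) * m = m + m * k := by ring
    omega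
  rw [h1, Nat.add_mul_div_left _ _ (by omega : 0 < m), Nat.div_eq_of_lt (by omega)]
  omega

end OGF
namespace OGF

variable {a b m : ℕ} {F : Finset (ℕ × ℕ)}

lemma mem_Sab_iff (ha : 2 ≤ a) (hb : b = a * m + 1) {n : ℕ} :
    n ∈ Sab a b ↔ ∃ s, 1 ≤ s ∧ s + 1 ≤ a ∧ n = s * m := by
  simp only [Sab, Finset.mem_image, Finset.mem_Icc]
  constructor
  · rintro ⟨i, ⟨h1, h2⟩, rfl⟩
    refine ⟨i, h1, by omega, ?_⟩
    have e : i * b = a * (i * m) + i := by rw [hb]; ring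
    rw [e, Nat.mul_add_div (by omega), Nat.div_eq_of_lt (by omega)]
    omega
  · rintro ⟨s, h1, h2, rfl⟩
    refine ⟨s, ⟨h1, by omega⟩, ?_⟩
    have e : s * b = a * (s * m) + s := by rw [hb]; ring
    rw [e, Nat.mul_add_div (by omega), Nat.div_eq_of_lt (by omega)]
    omega

lemma adm_struct (ha : 2 ≤ a) (hm : 1 ≤ m) (hb : b = a * m + 1) {d : ℕ × ℕ}
    (hd : Admissible a b d) :
    d.2 = d.1 + sdm m d * m + 1 ∧ 1 ≤ sdm m d ∧ sdm m d + 1 ≤ a ∧ d.2 ≤ b ∧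
      (d.1 = 0 → d.2 < b) := by
  obtain ⟨⟨h2le, hjb, hne⟩, hS1, -⟩ := hd
  rw [mem_Sab_iff ha hb] at hS1
  obtain ⟨s, hs1, hsa, hsm⟩ := hS1
  have hsd : sdm m d = s := by
    rw [sdm, hsm, Nat.mul_div_cancel _ (by omega : 0 < m)]
  rw [hsd]
  refine ⟨by omega, hs1, hsa, hjb, ?_⟩
  intro h0
  rcases Nat.lt_or_ge d.2 b with h | h
  · exact h
  · exact absurd ⟨h0, by omega⟩ hne

/-- division computation: `(i + s*m)/m = i/m + s`. -/
lemma div_shift (hm : 1 ≤ m) (i s : ℕ) : (i + s * m) / m = i / m + s := by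
  rw [show i + s * m = i + m * s from by rw [Nat.mul_comm], 
    Nat.add_mul_div_left _ _ (by omega : 0 < m)]

lemma hh_base (ha : 2 ≤ a) (hm : 1 ≤ m) (hb : b = a * m + 1)
    (hF : ∀ d ∈ F, Admissible a b d) :
    ∀ n x, b ≤ x + n → x + 1 < b → x / m + 1 ≤ hh a b m F x := by
  intro n
  induction n with
  | zero => intro x h1 h2; omega
  | succ n ih =>
    intro x hxn hxb
    apply le_hh
    · have : x / m < a := (Nat.div_lt_iff_lt_mul (by omega)).2 (by omega)
      omega
    · intro d hd
      have hdF : d ∈ F := (Finset.mem_filter.1 hd).1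
      obtain ⟨hxi, hxj, hjb⟩ := (Finset.mem_filter.1 hd).2
      obtain ⟨hj, hs1, hsa, -, -⟩ := adm_struct ha hm hb (hF d hdF)
      set s := sdm m d with hs
      rcases Nat.lt_or_ge d.2 b with hjlt | hjge
      · have hih : (d.2 - 1) / m + 1 ≤ hh a b m F (d.2 - 1) :=
          ih (d.2 - 1) (by omega) (by omega)
        have e2 : (d.2 - 1) / m = d.1 / m + s := by
          rw [show d.2 - 1 = d.1 + s * m from by omega, div_shift hm]
        have hdiv : x / m ≤ d.1 / m := Nat.div_le_div_right (by omega)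
        omega
      · have htop : hh a b m F (d.2 - 1) = a := hh_top (by omega)
        rw [htop]
        have hsm : (a - s) * m = a * m - s * m := by rw [Nat.sub_mul]
        have hx' : x < (a - s) * m := by omega
        have : x / m < a - s := (Nat.div_lt_iff_lt_mul (by omega : 0 < m)).2 hx'
        omega

lemma hh_s_lt (ha : 2 ≤ a) (hm : 1 ≤ m) (hb : b = a * m + 1)
    (hF : ∀ d ∈ F, Admissible a b d) {d : ℕ × ℕ} (hd : d ∈ F) :
    sdm m d + 1 ≤ hh a b m F (d.2 - 1) := by
  obtain ⟨hj, hs1, hsa, hjb, -⟩ := adm_struct ha hm hb (hF d hd)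
  rcases Nat.lt_or_ge (d.2 - 1 + 1) b with hlt | hge
  · have hih := hh_base ha hm hb hF b (d.2 - 1) (by omega) hlt
    have e2 : (d.2 - 1) / m = d.1 / m + sdm m d := by
      rw [show d.2 - 1 = d.1 + sdm m d * m from by omega, div_shift hm]
    rw [e2] at hih
    have h3 := Nat.le_add_left (sdm m d + 1) (d.1 / m)
    rw [← Nat.add_assoc] at h3
    exact h3.trans hih
  · rw [hh_top (by omega)]; omega

end OGF
namespace OGF

variable {a b m : ℕ} {F : Finset (ℕ × ℕ)}

lemma key (ha : 2 ≤ a) (hm : 1 ≤ m) (hb : b = a * m + 1)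
    (hF : ∀ d ∈ F, Admissible a b d)
    (hNC : ∀ d ∈ F, ∀ d' ∈ F, ¬Crosses d d') :
    ∀ n x d, d ∈ F → b - x ≤ n → d.1 ≤ x → x + 2 ≤ d.2 →
      hh a b m F (d.2 - 1) - sdm m d + ((x - d.1) / m + 1) ≤ hh a b m F x := by
  intro n
  induction n with
  | zero =>
    intro x d hd hn h1 h2
    have := (adm_struct ha hm hb (hF d hd)).2.2.2.1
    omega
  | succ n ih =>
    intro x d hd hn hx1 hx2
    obtain ⟨hj, hs1, hsa, hjb, -⟩ := adm_struct ha hm hb (hF d hd)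
    set s := sdm m d with hsdef
    -- (x - d.1)/m + 1 ≤ s
    have hsx : (x - d.1) / m + 1 ≤ s := by
      have h1 : x - d.1 ≤ s * m - 1 := by omega
      have h2 : (x - d.1) / m ≤ (s * m - 1) / m := Nat.div_le_div_right h1
      rw [arith2 hs1 hm] at h2
      omega
    have hA := hh_le (F := F) (a := a) (b := b) (m := m) (d.2 - 1)
    have hAlow := hh_s_lt ha hm hb hF hd
    apply le_hh
    · omega
    · intro d' hd'
      have hd'F : d' ∈ F := (Finset.mem_filter.1 hd').1
      obtain ⟨hxi', hxj', hjb'⟩ := (Finset.mem_filter.1 hd').2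
      obtain ⟨hj', hs1', hsa', hjb'2, -⟩ := adm_struct ha hm hb (hF d' hd'F)
      set s' := sdm m d' with hsdef'
      rcases le_or_gt d.2 d'.1 with hcase | hcase
      · -- d' entirely to the right of d
        have hmem : d' ∈ filt b F (d.2 - 1) := by
          simp only [filt, Finset.mem_filter]
          exact ⟨hd'F, by omega, by omega, hjb'⟩
        have hterm := hh_le_term (a := a) (m := m) hmem
        omega
      · -- d'.1 < d.2 : not crossing forces d'.2 ≤ d.2
        have hncross := hNC d hd d' hd'F
        have hle : d'.2 ≤ d.2 := by
          by_contra hcon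
          exact hncross (Or.inl ⟨by omega, by omega, by omega⟩)
        rcases Nat.eq_or_lt_of_le hle with heq | hlt
        · -- shared right endpoint
          have hss : s' * m < s * m := by omega
          have hss' : s' < s := by
            by_contra hcon
            have : s * m ≤ s' * m := Nat.mul_le_mul_right m (by omega)
            omega
          have hdiff : d'.1 - d.1 = (s - s') * m := by
            have : (s - s') * m = s * m - s' * m := by rw [Nat.sub_mul]
            omega
          have hxd : (x - d.1) / m + 1 ≤ s - s' := by
            have h1 : x - d.1 ≤ (s - s') * m - 1 := by omega
            have h2 : (x - d.1) / m ≤ ((s - s') * m - 1) / m := Nat.div_le_div_right h1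
            rw [arith2 (by omega) hm] at h2
            omega
          rw [heq]
          omega
        · -- d' strictly inside d : use induction hypothesis at d'.2 - 1
          have hih := ih (d'.2 - 1) d hd (by omega) (by omega) (by omega)
          have e2 : (d'.2 - 1 - d.1) / m = (d'.1 - d.1) / m + s' := by
            rw [show d'.2 - 1 - d.1 = (d'.1 - d.1) + s' * m from by omega, div_shift hm]
          rw [e2] at hih
          have hdiv : (x - d.1) / m ≤ (d'.1 - d.1) / m := Nat.div_le_div_right (by omega)
          omega

end OGF
namespace OGF

variable {a b m : ℕ} {F : Finset (ℕ × ℕ)}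

/-- The Dyck path associated to a noncrossing family of admissible diagonals. -/
def DF (a b m : ℕ) (F : Finset (ℕ × ℕ)) (ha : 2 ≤ a) (hm : 1 ≤ m) (hb : b = a * m + 1)
    (hF : ∀ d ∈ F, Admissible a b d) : DyckPath a b where
  h := hh a b m F
  mono := fun x y hxy => hh_mono hxy
  norm := fun x hx => hh_top (by omega)
  above := by
    intro x hx
    rcases Nat.eq_or_lt_of_le (show x + 1 ≤ b from hx) with heq | hlt
    · rw [hh_top (by omega)]
      rw [← heq]
      exact le_of_eq (Nat.mul_comm _ _)
    · have hbase := hh_base ha hm hb hF b x (by omega) hlt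
      have h1 : a * (x + 1) < (a * m + 1) * ((x + 1 - 1) / m + 1) :=
        arith1 hm (x + 1) (by omega)
      simp only [Nat.add_sub_cancel] at h1
      calc a * (x + 1) ≤ (a * m + 1) * (x / m + 1) := le_of_lt h1
        _ ≤ (a * m + 1) * hh a b m F x := Nat.mul_le_mul_left _ hbase
        _ = b * hh a b m F x := by rw [hb]

lemma mem_FD_of (ha : 2 ≤ a) (hm : 1 ≤ m) (hb : b = a * m + 1)
    (hF : ∀ d ∈ F, Admissible a b d)
    (hNC : ∀ d ∈ F, ∀ d' ∈ F, ¬Crosses d d') {d : ℕ × ℕ} (hd : d ∈ F) :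
    d ∈ FD a b (DF a b m F ha hm hb hF) := by
  obtain ⟨hj, hs1, hsa, hjb, -⟩ := adm_struct ha hm hb (hF d hd)
  set s := sdm m d with hsdef
  have hsm1 : 1 ≤ s * m := by
    calc 1 = 1 * 1 := rfl
    _ ≤ s * m := Nat.mul_le_mul hs1 hm
  set A := hh a b m F (d.2 - 1) with hAdef
  have hAlow : s + 1 ≤ A := hh_s_lt ha hm hb hF hd
  have hAle : A ≤ a := hh_le _
  refine ⟨A - s, ?_, ?_, ?_⟩
  · -- BottomNorth
    refine ⟨by omega, ?_, ?_⟩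
    · show (if d.1 = 0 then 0 else hh a b m F (d.1 - 1)) ≤ A - s
      rcases Nat.eq_zero_or_pos d.1 with h0 | h0
      · rw [if_pos h0]; omega
      · rw [if_neg (by omega)]
        have hmem : d ∈ filt b F (d.1 - 1) := by
          simp only [filt, Finset.mem_filter]
          exact ⟨hd, by omega, by omega, hjb⟩
        exact hh_le_term hmem
    · show A - s < hh a b m F d.1
      have hk := key ha hm hb hF hNC b d.1 d hd (by omega) le_rfl (by omega)
      rw [Nat.sub_self, Nat.zero_div] at hk
      omega
  · -- not (0,0)
    intro hcon
    have h1 := congrArg Prod.snd hcon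
    simp only at h1
    omega
  · -- IsLaserDiag
    refine ⟨by omega, hjb, ?_, ?_⟩
    · -- hit condition
      show b * A < b * (A - s) + a * (d.2 - d.1)
      have e1 : d.2 - d.1 = s * m + 1 := by omega
      rw [e1, hb]
      have e2 : A - s + s = A := by omega
      nlinarith [e2, hsa, hs1]
    · -- below conditions
      intro u hu hu1
      show b * (A - s) + a * (u + 1 - d.1) < b * hh a b m F u
      have hk := key ha hm hb hF hNC b u d hd (by omega) hu (by omega)
      have h1 : a * (u + 1 - d.1) < b * ((u + 1 - d.1 - 1) / m + 1) := by
        rw [hb]; exact arith1 hm _ (by omega)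
      have e1 : u + 1 - d.1 - 1 = u - d.1 := by omega
      rw [e1] at h1
      calc b * (A - s) + a * (u + 1 - d.1)
          < b * (A - s) + b * ((u - d.1) / m + 1) := by omega
        _ = b * (A - s + ((u - d.1) / m + 1)) := by ring
        _ ≤ b * hh a b m F u := Nat.mul_le_mul_left _ hk

end OGF
namespace OGF

variable {a b m : ℕ}

lemma laser_struct (ha : 2 ≤ a) (hm : 1 ≤ m) (hb : b = a * m + 1) {D : DyckPath a b}
    {x y k : ℕ} (hBN : BottomNorth a b D x y) (hL : IsLaserDiag a b D x y k) :
    ∃ Q, 1 ≤ Q ∧ Q < a ∧ k = x + Q * m + 1 := by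
  obtain ⟨hxk, hkb, hhit, hbelow⟩ := hL
  obtain ⟨hxb, hlo, hhi⟩ := hBN
  have hab' : a < b := by
    have : a * 1 ≤ a * m := Nat.mul_le_mul_left a hm
    omega
  -- k ≥ x + 2
  have hstep : x + 2 ≤ k := by
    by_contra h
    have hk1 : k = x + 1 := by omega
    rw [hk1] at hhit
    have e1 : x + 1 - 1 = x := by omega
    have e2 : x + 1 - x = 1 := by omega
    rw [e1, e2] at hhit
    have h3 : b * (y + 1) ≤ b * D.h x := Nat.mul_le_mul_left b hhi
    have e3 : b * (y + 1) = b * y + b := by ring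
    omega
  have hmono : D.h x ≤ D.h (k - 1) := D.mono (by omega)
  have hQpos : y < D.h (k - 1) := lt_of_lt_of_le hhi hmono
  have h2 := hbelow (k - 2) (by omega) (by omega)
  have e2 : k - 2 + 1 - x = k - 1 - x := by omega
  rw [e2] at h2
  have h3 : D.h (k - 2) ≤ D.h (k - 1) := D.mono (by omega)
  have h3' : b * D.h (k - 2) ≤ b * D.h (k - 1) := Nat.mul_le_mul_left _ h3
  set Q := D.h (k - 1) - y with hQdef
  set c := k - x with hcdef
  have hcb : c ≤ b := by omega
  have hc2 : 2 ≤ c := by omega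
  have hQ1 : b * y + b * Q = b * D.h (k - 1) := by
    have e : y + Q = D.h (k - 1) := by omega
    calc b * y + b * Q = b * (y + Q) := by ring
      _ = b * D.h (k - 1) := by rw [e]
  have e4 : k - 1 - x = c - 1 := by omega
  rw [e4] at h2
  have hup : b * Q < a * c := by omega
  have hdn : a * (c - 1) < b * Q := by omega
  have hQa : Q < a := by
    by_contra h
    have h4 : a * c ≤ a * b := Nat.mul_le_mul_left a hcb
    have h5 : b * a ≤ b * Q := Nat.mul_le_mul_left b (by omega)
    have e5 : a * b = b * a := Nat.mul_comm _ _
    omega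
  have hQ2 : 1 ≤ Q := by
    by_contra h
    have hQ0 : Q = 0 := by omega
    have e6 : b * Q = 0 := by rw [hQ0]; ring
    have h7 : 1 * 1 ≤ a * (c - 1) := Nat.mul_le_mul (by omega) (by omega)
    omega
  have e5 : b * Q = a * m * Q + Q := by rw [hb]; ring
  have e7 : a * (Q * m) = a * m * Q := by ring
  have hcc : c - 1 = Q * m := by
    rcases lt_trichotomy (c - 1) (Q * m) with h | h | h
    · have h4 : a * c ≤ a * (Q * m) := Nat.mul_le_mul_left a (by omega)
      omega
    · exact h
    · have h4 : a * (Q * m + 1) ≤ a * (c - 1) := Nat.mul_le_mul_left a (by omega)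
      have e8 : a * (Q * m + 1) = a * m * Q + a := by ring
      omega
  exact ⟨Q, hQ2, hQa, by omega⟩

lemma FD_adm (ha : 2 ≤ a) (hm : 1 ≤ m) (hb : b = a * m + 1) {D : DyckPath a b}
    {d : ℕ × ℕ} (hd : d ∈ FD a b D) : Admissible a b d := by
  obtain ⟨y, hBN, hne, hL⟩ := hd
  obtain ⟨Q, hQ1, hQa, hk⟩ := laser_struct ha hm hb hBN hL
  have hkb : d.2 ≤ b := hL.2.1
  have hQm : 1 ≤ Q * m := by
    calc 1 = 1 * 1 := rfl
    _ ≤ Q * m := Nat.mul_le_mul hQ1 hm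
  refine ⟨⟨by omega, hkb, ?_⟩, ?_, ?_⟩
  · rintro ⟨h0, hbb⟩
    have : Q * m = a * m := by omega
    have : Q = a := Nat.eq_of_mul_eq_mul_right (by omega) this
    omega
  · rw [mem_Sab_iff ha hb]
    exact ⟨Q, hQ1, by omega, by omega⟩
  · rw [mem_Sab_iff ha hb]
    refine ⟨a - Q, by omega, by omega, ?_⟩
    have e : (a - Q) * m = a * m - Q * m := Nat.sub_mul _ _ _
    have h1 : Q * m ≤ a * m := Nat.mul_le_mul_right m (by omega)
    omega

lemma no_cross_aux {D : DyckPath a b} {x y k x' y' k' : ℕ}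
    (hBN : BottomNorth a b D x y) (hL : IsLaserDiag a b D x y k)
    (hBN' : BottomNorth a b D x' y') (hL' : IsLaserDiag a b D x' y' k')
    (o1 : x < x') (o2 : x' < k) (o3 : k < k') : False := by
  obtain ⟨hxk, hkb, hhit, hbelow⟩ := hL
  obtain ⟨hxk', hkb', hhit', hbelow'⟩ := hL'
  have h1 := hbelow (x' - 1) (by omega) (by omega)
  have e1 : x' - 1 + 1 - x = x' - x := by omega
  rw [e1] at h1
  have hlo' : D.h (x' - 1) ≤ y' := by
    have := hBN'.2.1
    rwa [if_neg (by omega : ¬ x' = 0)] at this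
  have hmul : b * D.h (x' - 1) ≤ b * y' := Nat.mul_le_mul_left b hlo'
  have h2 := hbelow' (k - 1) (by omega) (by omega)
  have e2 : k - 1 + 1 - x' = k - x' := by omega
  rw [e2] at h2
  have e3 : k - x = (x' - x) + (k - x') := by omega
  have hsplit : a * (k - x) = a * (x' - x) + a * (k - x') := by rw [e3, Nat.mul_add]
  omega

lemma FD_noncross {D : DyckPath a b} {d d' : ℕ × ℕ}
    (hd : d ∈ FD a b D) (hd' : d' ∈ FD a b D) : ¬Crosses d d' := by
  obtain ⟨y, hBN, -, hL⟩ := hd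
  obtain ⟨y', hBN', -, hL'⟩ := hd'
  rintro (⟨c1, c2, c3⟩ | ⟨c1, c2, c3⟩)
  · exact no_cross_aux hBN hL hBN' hL' c1 c2 c3
  · exact no_cross_aux hBN' hL' hBN hL c1 c2 c3

end OGF
/-- If `b ≡ 1 (mod a)`, then the obstruction graph `OG(a,b)` has no edges;
equivalently, `Âss(a,b) = Ass(a,b)`. -/
theorem OG_no_edges_of_fuss (a b : ℕ) (ha : 0 < a) (hab : a < b)
    (hcop : Nat.Coprime a b) (hmod : b % a = 1) :
    (∀ d d' : ℕ × ℕ, ¬OGEdge a b d d') ∧ (hatAss a b).faces = (Ass a b).faces := by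
  have ha2 : 2 ≤ a := by
    rcases Nat.lt_or_ge a 2 with h | h
    · have h1 : a = 1 := by omega
      subst h1
      rw [Nat.mod_one] at hmod
      omega
    · exact h
  set m := b / a with hmdef
  have hb : b = a * m + 1 := by
    have h := Nat.div_add_mod b a
    rw [← hmdef] at h
    omega
  have hm : 1 ≤ m := by
    rcases Nat.eq_zero_or_pos m with h | h
    · rw [h] at hb; omega
    · exact h
  have heq : (hatAss a b).faces = (Ass a b).faces := by
    ext Fs
    constructor
    · rintro ⟨hadm, hnc⟩
      exact ⟨OGF.DF a b m Fs ha2 hm hb hadm,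
        fun d hd => OGF.mem_FD_of ha2 hm hb hadm hnc hd⟩
    · rintro ⟨D, hD⟩
      exact ⟨fun d hd => OGF.FD_adm ha2 hm hb (hD d hd),
        fun d hd d' hd' => OGF.FD_noncross (hD d hd) (hD d' hd')⟩
  refine ⟨?_, heq⟩
  rintro d d' ⟨hne, hmem, hnot⟩
  rw [heq] at hmem
  exact hnot hmem
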